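/- Let (ℝ^d, ‖·‖) be an inner-product space with inner product ⟪·,·⟫, and let p ≥ 2. Then for all x, y ∈ ℝ^d: ‖x+y‖^p ≤ ‖x‖^p + p‖x‖^{p-2}⟪x,y⟫ + (1/2)p(p-1)(max(‖x‖, ‖x+y‖))^{p-2}‖y‖². -/

import Mathlib

open scoped RealInnerProductSpace

lemma star_aux (p : ℝ) (hp : 2 ≤ p) {a b c : ℝ} (ha : 0 ≤ a) (hb : 0 ≤ b)
    (hac : a ≤ c) (hbc : b ≤ c) :
    b ^ p ≤ a ^ p + p * a ^ (p - 1) * (b - a)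
      + (1 / 2) * p * (p - 1) * c ^ (p - 2) * (b - a) ^ 2 := by
  have hc : 0 ≤ c := le_trans ha hac
  set K : ℝ := p * (p - 1) * c ^ (p - 2) with hK
  have hf' : ∀ t : ℝ, HasDerivAt (fun t : ℝ => K / 2 * t ^ 2 - t ^ p)
      (K * t - p * t ^ (p - 1)) t := by
    intro t
    have h1 : HasDerivAt (fun t : ℝ => t ^ p) (p * t ^ (p - 1)) t :=
      Real.hasDerivAt_rpow_const (Or.inr (by linarith))
    have h2 : HasDerivAt (fun t : ℝ => K / 2 * t ^ 2) (K / 2 * (2 * t)) t := by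
      simpa using (hasDerivAt_pow 2 t).const_mul (K / 2)
    exact (h2.sub h1).congr_deriv (by ring)
  have hf'' : ∀ t : ℝ, HasDerivAt (fun t : ℝ => K * t - p * t ^ (p - 1))
      (K - p * ((p - 1) * t ^ (p - 2))) t := by
    intro t
    have h1 : HasDerivAt (fun t : ℝ => t ^ (p - 1)) ((p - 1) * t ^ (p - 1 - 1)) t :=
      Real.hasDerivAt_rpow_const (Or.inr (by linarith))
    have h1' : HasDerivAt (fun t : ℝ => t ^ (p - 1)) ((p - 1) * t ^ (p - 2)) t := by
      convert h1 using 2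
      ring_nf
    have h2 : HasDerivAt (fun t : ℝ => K * t) (K * 1) t := (hasDerivAt_id t).const_mul K
    exact (h2.sub (h1'.const_mul p)).congr_deriv (by ring)
  have hconv : ConvexOn ℝ (Set.Icc 0 c) (fun t : ℝ => K / 2 * t ^ 2 - t ^ p) := by
    apply convexOn_of_hasDerivWithinAt2_nonneg (convex_Icc 0 c)
      (fun t _ => (hf' t).continuousAt.continuousWithinAt)
      (fun t _ => (hf' t).hasDerivWithinAt)
      (fun t _ => (hf'' t).hasDerivWithinAt)
    intro t ht
    rw [interior_Icc] at ht
    have htc : t ^ (p - 2) ≤ c ^ (p - 2) :=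
      Real.rpow_le_rpow ht.1.le ht.2.le (by linarith)
    have hpp : 0 ≤ p * (p - 1) := by nlinarith
    have := mul_le_mul_of_nonneg_left htc hpp
    simp only [hK]
    nlinarith [this]
  -- tangent line inequality at a, evaluated at b
  have key : K / 2 * a ^ 2 - a ^ p + (K * a - p * a ^ (p - 1)) * (b - a)
      ≤ K / 2 * b ^ 2 - b ^ p := by
    have hmema : a ∈ Set.Icc 0 c := ⟨ha, hac⟩
    have hmemb : b ∈ Set.Icc 0 c := ⟨hb, hbc⟩
    rcases lt_trichotomy a b with hab | hab | hab
    · have hs := hconv.le_slope_of_hasDerivAt hmema hmemb hab (hf' a)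
      rw [slope_def_field] at hs
      have := (le_div_iff₀ (by linarith : (0:ℝ) < b - a)).mp hs
      nlinarith [this]
    · subst hab; simp
    · have hs := hconv.slope_le_of_hasDerivAt hmemb hmema hab (hf' a)
      rw [slope_def_field] at hs
      have := (div_le_iff₀ (by linarith : (0:ℝ) < a - b)).mp hs
      nlinarith [this]
  rw [hK] at key
  nlinarith [key]

/-- for a norm induced by an inner product and a real exponent `p ≥ 2`,
`‖x+y‖^p ≤ ‖x‖^p + p ‖x‖^{p-2} ⟪x,y⟫ + (1/2) p (p-1) (max ‖x‖ ‖x+y‖)^{p-2} ‖y‖²`. -/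
theorem stmt4_pth_power_expansion
    {E : Type*} [NormedAddCommGroup E] [InnerProductSpace ℝ E] [FiniteDimensional ℝ E]
    (p : ℝ) (hp : 2 ≤ p) (x y : E) :
    ‖x + y‖ ^ p ≤ ‖x‖ ^ p + p * ‖x‖ ^ (p - 2) * ⟪x, y⟫
      + (1 / 2) * p * (p - 1) * (max ‖x‖ ‖x + y‖) ^ (p - 2) * ‖y‖ ^ 2 := by
  have ha : (0:ℝ) ≤ ‖x‖ := norm_nonneg x
  have hb : (0:ℝ) ≤ ‖x + y‖ := norm_nonneg _
  have hM1 : ‖x‖ ≤ max ‖x‖ ‖x + y‖ := le_max_left _ _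
  have hM2 : ‖x + y‖ ≤ max ‖x‖ ‖x + y‖ := le_max_right _ _
  have hstar := star_aux p hp ha hb hM1 hM2
  have h2I : ‖x + y‖ ^ 2 = ‖x‖ ^ 2 + 2 * ⟪x, y⟫ + ‖y‖ ^ 2 := norm_add_sq_real x y
  have habs : |‖x + y‖ - ‖x‖| ≤ ‖y‖ := by
    simpa using abs_norm_sub_norm_le (x + y) x
  obtain ⟨habs1, habs2⟩ := abs_le.mp habs
  have hsq : (‖x + y‖ - ‖x‖) ^ 2 ≤ ‖y‖ ^ 2 := sq_le_sq' (by linarith) habs2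
  have hA : ‖x‖ ^ (p - 2) * ‖x‖ = ‖x‖ ^ (p - 1) := by
    rcases eq_or_lt_of_le ha with h0 | h0
    · rw [← h0, Real.zero_rpow (by linarith : p - 1 ≠ 0), mul_zero]
    · rw [show p - 1 = (p - 2) + 1 by ring, Real.rpow_add_one h0.ne']
  rw [← hA] at hstar
  have hAB : ‖x‖ ^ (p - 2) ≤ (max ‖x‖ ‖x + y‖) ^ (p - 2) :=
    Real.rpow_le_rpow ha hM1 (by linarith)
  have hA0 : (0:ℝ) ≤ ‖x‖ ^ (p - 2) := Real.rpow_nonneg ha _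
  have hcoef : 0 ≤ (p - 1) * (max ‖x‖ ‖x + y‖) ^ (p - 2) - ‖x‖ ^ (p - 2) := by
    nlinarith [hAB, hA0, le_trans hA0 hAB]
  have hD : 0 ≤ p * ((p - 1) * (max ‖x‖ ‖x + y‖) ^ (p - 2) - ‖x‖ ^ (p - 2))
      * (‖y‖ ^ 2 - (‖x + y‖ - ‖x‖) ^ 2) :=
    mul_nonneg (mul_nonneg (by linarith) hcoef) (by linarith)
  have hI : ⟪x, y⟫ = (‖x + y‖ ^ 2 - ‖x‖ ^ 2 - ‖y‖ ^ 2) / 2 := by linarith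
  rw [hI]
  linarith [hstar, hD]
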